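/- Let f = x₁₁ and g = det of the 3×3 matrix of variables (x_{ij}), and let A = A(y₁,y₂,y₃) be the matrix with rows (0, 1, y₁), (1, y₃, 0), (0, y₂, y₁y₂) for nonzero reals y₁, y₂, y₃. Let N₁ = ∇f(A) and N₂ = ∇g(A) be the gradients (as 3×3 matrices of partial derivatives) with respect to the trace inner product ⟨A,B⟩ = tr(AᵀB). Let G be the 2×2 Gram matrix of N₁, N₂. Then G₁₁ = 1, G₁₂ = y₁y₂y₃, G₂₂ = (1+y₂²)(1+y₁²+y₁²y₃²), and det G = 1 + y₁² + y₂² + y₁²y₂² + y₁²y₃² > 0; moreover Hess g(N₁, N₂) = −y₃, Hess g(N₁, N₁) = 0, and Hess g(N₂, N₂) = 0 at A. -/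

import Mathlib

open Matrix

/-- Gradient of a function of a `3×3` matrix with respect to the trace inner product:
the matrix of partial derivatives. -/
noncomputable def matGrad (F : Matrix (Fin 3) (Fin 3) ℝ → ℝ)
    (A : Matrix (Fin 3) (Fin 3) ℝ) : Matrix (Fin 3) (Fin 3) ℝ :=
  Matrix.of fun i j => deriv (fun t : ℝ => F (A + t • Matrix.single i j 1)) 0

/-- Hessian of `F` at `A` applied to matrix directions `U, V`:
`Σ (∂²F/∂x_{ab}∂x_{cd})(A) U_{ab} V_{cd}`. -/
noncomputable def matHess (F : Matrix (Fin 3) (Fin 3) ℝ → ℝ)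
    (A U V : Matrix (Fin 3) (Fin 3) ℝ) : ℝ :=
  deriv (fun s : ℝ => deriv (fun t : ℝ => F (A + s • U + t • V)) 0) 0

/-- The point `A(y₁,y₂,y₃)`. -/
def Apt (y₁ y₂ y₃ : ℝ) : Matrix (Fin 3) (Fin 3) ℝ :=
  !![0, 1, y₁; 1, y₃, 0; 0, y₂, y₁ * y₂]



lemma deriv_linear (f : ℝ → ℝ) (c₀ c₁ : ℝ) (h : ∀ t, f t = c₀ + c₁ * t) :
    deriv f 0 = c₁ := by
  have hf : f = fun t => c₀ + c₁ * t := funext h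
  rw [hf]
  simpa using (((hasDerivAt_id (0 : ℝ)).const_mul c₁).const_add c₀).deriv

lemma hess_eval (A U V : Matrix (Fin 3) (Fin 3) ℝ) (c₀ : ℝ → ℝ) (b₀ b₁ : ℝ)
    (h : ∀ s t : ℝ, Matrix.det (A + s • U + t • V) = c₀ s + (b₀ + b₁ * s) * t) :
    matHess Matrix.det A U V = b₁ := by
  unfold matHess
  have h1 : (fun s : ℝ => deriv (fun t : ℝ => Matrix.det (A + s • U + t • V)) 0)
      = fun s : ℝ => b₀ + b₁ * s := by
    funext s
    exact deriv_linear _ (c₀ s) _ (fun t => h s t)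
  rw [h1]
  exact deriv_linear _ b₀ b₁ (fun _ => rfl)

/-- Gram matrix and Hessian computations for `f = x₁₁` and `g = det` at
`A(y₁,y₂,y₃)`, with `N₁ = ∇f(A)`, `N₂ = ∇g(A)` and the trace inner product
`⟨A,B⟩ = tr(Aᵀ B)`. -/
theorem gram_and_hessian_computation (y₁ y₂ y₃ : ℝ)
    (hy₁ : y₁ ≠ 0) (hy₂ : y₂ ≠ 0) (hy₃ : y₃ ≠ 0) :
    Matrix.trace ((matGrad (fun M => M 0 0) (Apt y₁ y₂ y₃))ᵀ *
        matGrad (fun M => M 0 0) (Apt y₁ y₂ y₃)) = 1 ∧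
    Matrix.trace ((matGrad (fun M => M 0 0) (Apt y₁ y₂ y₃))ᵀ *
        matGrad Matrix.det (Apt y₁ y₂ y₃)) = y₁ * y₂ * y₃ ∧
    Matrix.trace ((matGrad Matrix.det (Apt y₁ y₂ y₃))ᵀ *
        matGrad Matrix.det (Apt y₁ y₂ y₃)) =
      (1 + y₂ ^ 2) * (1 + y₁ ^ 2 + y₁ ^ 2 * y₃ ^ 2) ∧
    (!![Matrix.trace ((matGrad (fun M => M 0 0) (Apt y₁ y₂ y₃))ᵀ *
          matGrad (fun M => M 0 0) (Apt y₁ y₂ y₃)),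
        Matrix.trace ((matGrad (fun M => M 0 0) (Apt y₁ y₂ y₃))ᵀ *
          matGrad Matrix.det (Apt y₁ y₂ y₃));
        Matrix.trace ((matGrad Matrix.det (Apt y₁ y₂ y₃))ᵀ *
          matGrad (fun M => M 0 0) (Apt y₁ y₂ y₃)),
        Matrix.trace ((matGrad Matrix.det (Apt y₁ y₂ y₃))ᵀ *
          matGrad Matrix.det (Apt y₁ y₂ y₃))] : Matrix (Fin 2) (Fin 2) ℝ).det =
      1 + y₁ ^ 2 + y₂ ^ 2 + y₁ ^ 2 * y₂ ^ 2 + y₁ ^ 2 * y₃ ^ 2 ∧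
    (0 : ℝ) < 1 + y₁ ^ 2 + y₂ ^ 2 + y₁ ^ 2 * y₂ ^ 2 + y₁ ^ 2 * y₃ ^ 2 ∧
    matHess Matrix.det (Apt y₁ y₂ y₃) (matGrad (fun M => M 0 0) (Apt y₁ y₂ y₃))
        (matGrad Matrix.det (Apt y₁ y₂ y₃)) = -y₃ ∧
    matHess Matrix.det (Apt y₁ y₂ y₃) (matGrad (fun M => M 0 0) (Apt y₁ y₂ y₃))
        (matGrad (fun M => M 0 0) (Apt y₁ y₂ y₃)) = 0 ∧
    matHess Matrix.det (Apt y₁ y₂ y₃) (matGrad Matrix.det (Apt y₁ y₂ y₃))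
        (matGrad Matrix.det (Apt y₁ y₂ y₃)) = 0 := by
  have hstd : ∀ (i j : Fin 3) (t : ℝ),
      Apt y₁ y₂ y₃ + t • Matrix.single i j 1 =
        Matrix.of fun a b => Apt y₁ y₂ y₃ a b + (if i = a ∧ j = b then t else 0) := by
    intro i j t
    ext a b
    simp only [Matrix.add_apply, Matrix.smul_apply, Matrix.single,
      Matrix.of_apply, smul_eq_mul, mul_ite, mul_one, mul_zero]
  have hN1 : matGrad (fun M => M 0 0) (Apt y₁ y₂ y₃)
      = !![1, 0, 0; 0, 0, 0; 0, 0, 0] := by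
    ext i j
    simp only [matGrad, Matrix.of_apply, hstd]
    fin_cases i <;> fin_cases j <;>
      exact deriv_linear _ 0 _ (fun t => by
        norm_num [Apt, Fin.ext_iff])
  have hN2 : matGrad Matrix.det (Apt y₁ y₂ y₃)
      = !![y₁ * y₂ * y₃, -(y₁ * y₂), y₂; 0, 0, 0; -(y₁ * y₃), y₁, -1] := by
    ext i j
    simp only [matGrad, Matrix.of_apply, hstd]
    fin_cases i <;> fin_cases j <;>
      exact deriv_linear _ 0 _ (fun t => by
        norm_num [Matrix.det_fin_three, Apt, Fin.ext_iff, Matrix.cons_val_two, Matrix.vecHead, Matrix.vecTail]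
        try ring)
  have hT1 : (!![(1:ℝ), 0, 0; 0, 0, 0; 0, 0, 0])ᵀ = !![1, 0, 0; 0, 0, 0; 0, 0, 0] := by
    ext i j; fin_cases i <;> fin_cases j <;> rfl
  have hT2 : (!![y₁ * y₂ * y₃, -(y₁ * y₂), y₂; 0, 0, 0; -(y₁ * y₃), y₁, -1])ᵀ
      = !![y₁ * y₂ * y₃, 0, -(y₁ * y₃); -(y₁ * y₂), 0, y₁; y₂, 0, -1] := by
    ext i j; fin_cases i <;> fin_cases j <;> rfl
  rw [hN1, hN2, hT1, hT2]
  refine ⟨?_, ?_, ?_, ?_, by positivity, ?_, ?_, ?_⟩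
  · norm_num [Matrix.trace_fin_three, Matrix.mul_apply, Fin.sum_univ_three,
      Matrix.transpose_apply, Matrix.vecHead, Matrix.vecTail, Matrix.cons_val_two]
  · norm_num [Matrix.trace_fin_three, Matrix.mul_apply, Fin.sum_univ_three,
      Matrix.transpose_apply, Matrix.vecHead, Matrix.vecTail, Matrix.cons_val_two]
  · norm_num [Matrix.trace_fin_three, Matrix.mul_apply, Fin.sum_univ_three,
      Matrix.transpose_apply, Matrix.vecHead, Matrix.vecTail, Matrix.cons_val_two]
    ring
  · norm_num [Matrix.det_fin_two_of, Matrix.trace_fin_three, Matrix.mul_apply,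
      Fin.sum_univ_three, Matrix.transpose_apply, Matrix.vecHead, Matrix.vecTail, Matrix.cons_val_two]
    ring
  · refine hess_eval _ _ _ (fun s => y₁ * y₂ * y₃ * s)
      (1 + y₂ ^ 2 + y₁ ^ 2 + y₁ ^ 2 * y₃ ^ 2 + y₁ ^ 2 * y₂ ^ 2 + y₁ ^ 2 * y₂ ^ 2 * y₃ ^ 2)
      (-y₃) (fun s t => ?_)
    have hm : Apt y₁ y₂ y₃ + s • !![(1:ℝ), 0, 0; 0, 0, 0; 0, 0, 0]
        + t • !![y₁ * y₂ * y₃, -(y₁ * y₂), y₂; 0, 0, 0; -(y₁ * y₃), y₁, -1]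
        = !![s + t * (y₁ * y₂ * y₃), 1 - t * (y₁ * y₂), y₁ + t * y₂;
             1, y₃, 0;
             -(t * (y₁ * y₃)), y₂ + t * y₁, y₁ * y₂ - t] := by
      ext a b
      fin_cases a <;> fin_cases b <;>
        · norm_num [Apt, Matrix.add_apply, Matrix.smul_apply, Matrix.cons_val_two, Matrix.vecHead, Matrix.vecTail]
          try ring
    rw [hm]
    norm_num [Matrix.det_fin_three, Matrix.cons_val_two, Matrix.vecHead, Matrix.vecTail]
    ring
  · refine hess_eval _ _ _ (fun s => y₁ * y₂ * y₃ * s) (y₁ * y₂ * y₃) 0 (fun s t => ?_)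
    have hm : Apt y₁ y₂ y₃ + s • !![(1:ℝ), 0, 0; 0, 0, 0; 0, 0, 0]
        + t • !![(1:ℝ), 0, 0; 0, 0, 0; 0, 0, 0]
        = !![s + t, 1, y₁; 1, y₃, 0; 0, y₂, y₁ * y₂] := by
      ext a b
      fin_cases a <;> fin_cases b <;>
        · norm_num [Apt, Matrix.add_apply, Matrix.smul_apply, Matrix.cons_val_two, Matrix.vecHead, Matrix.vecTail]
          try ring
    rw [hm]
    norm_num [Matrix.det_fin_three, Matrix.cons_val_two, Matrix.vecHead, Matrix.vecTail]
    ring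
  · refine hess_eval _ _ _
      (fun s => (1 + y₂ ^ 2 + y₁ ^ 2 + y₁ ^ 2 * y₃ ^ 2 + y₁ ^ 2 * y₂ ^ 2 + y₁ ^ 2 * y₂ ^ 2 * y₃ ^ 2) * s)
      (1 + y₂ ^ 2 + y₁ ^ 2 + y₁ ^ 2 * y₃ ^ 2 + y₁ ^ 2 * y₂ ^ 2 + y₁ ^ 2 * y₂ ^ 2 * y₃ ^ 2)
      0 (fun s t => ?_)
    have hm : Apt y₁ y₂ y₃
        + s • !![y₁ * y₂ * y₃, -(y₁ * y₂), y₂; 0, 0, 0; -(y₁ * y₃), y₁, -1]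
        + t • !![y₁ * y₂ * y₃, -(y₁ * y₂), y₂; 0, 0, 0; -(y₁ * y₃), y₁, -1]
        = !![(s + t) * (y₁ * y₂ * y₃), 1 - (s + t) * (y₁ * y₂), y₁ + (s + t) * y₂;
             1, y₃, 0;
             -((s + t) * (y₁ * y₃)), y₂ + (s + t) * y₁, y₁ * y₂ - (s + t)] := by
      ext a b
      fin_cases a <;> fin_cases b <;>
        · norm_num [Apt, Matrix.add_apply, Matrix.smul_apply, Matrix.cons_val_two, Matrix.vecHead, Matrix.vecTail]
          try ring
    rw [hm]
    norm_num [Matrix.det_fin_three, Matrix.cons_val_two, Matrix.vecHead, Matrix.vecTail]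
    ring
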